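/- Let n be a positive integer, a, b integers with gcd(a, n) = gcd(b, n) = d. Then the number of residue classes x modulo n with gcd(x, n) = 1 and a·x ≡ b (mod n) equals φ(n)/φ(n/d), where φ is Euler's totient function. -/

import Mathlib

open Finset

-- fiber cardinality of a surjective hom between finite groups
lemma fiber_card {G H : Type*} [Group G] [Fintype G] [Group H] [Fintype H]
    [DecidableEq G] [DecidableEq H] (f : G →* H) (hf : Function.Surjective f) (c : H) :
    (Finset.univ.filter (fun g => f g = c)).card = Fintype.card G / Fintype.card H := by
  obtain ⟨g0, hg0⟩ := hf c
  have h1 : (Finset.univ.filter (fun g => f g = c)).card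
      = (Finset.univ.filter (fun g => f g = 1)).card := by
    apply Finset.card_bij' (fun g _ => g0⁻¹ * g) (fun g _ => g0 * g)
    · intro g hg
      simp only [mem_filter, mem_univ, true_and] at hg ⊢
      simp [hg, hg0]
    · intro g hg
      simp only [mem_filter, mem_univ, true_and] at hg ⊢
      simp [hg, hg0]
    · intro g _; group
    · intro g _; group
  rw [h1]
  have h2 : (Finset.univ.filter (fun g => f g = 1)).card = Fintype.card f.ker := by
    rw [Fintype.card_subtype]
    congr 1
    apply Finset.filter_congr
    intro g _
    simp [MonoidHom.mem_ker]
  have h3 : Fintype.card G = Fintype.card H * Fintype.card f.ker := by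
    have := Subgroup.card_eq_card_quotient_mul_card_subgroup f.ker
    simp only [Nat.card_eq_fintype_card] at this
    rw [this, Fintype.card_congr (QuotientGroup.quotientKerEquivOfSurjective f hf).toEquiv]
  rw [h2, h3, Nat.mul_div_cancel_left _ Fintype.card_pos]

theorem linear_congruence_coprime_count (n : ℕ) (hn : 0 < n) (a b : ℤ) (d : ℕ)
    (ha : Int.gcd a n = d) (hb : Int.gcd b n = d) :
    ((Finset.range n).filter
      (fun x => Nat.gcd x n = 1 ∧ a * (x : ℤ) % (n : ℤ) = b % (n : ℤ))).card
      = Nat.totient n / Nat.totient (n / d) := by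
  haveI : NeZero n := ⟨hn.ne'⟩
  have hdn : d ∣ n := by
    have := Int.gcd_dvd_right (a := a) (b := (n : ℤ))
    rw [ha] at this
    exact_mod_cast this
  have hd0 : 0 < d := by
    rcases Nat.eq_zero_or_pos d with h | h
    · subst h
      rw [Int.gcd_eq_zero_iff] at ha
      exact absurd (by exact_mod_cast ha.2) hn.ne'
    · exact h
  set m := n / d with hm_def
  have hmn : m ∣ n := Nat.div_dvd_of_dvd hdn
  have hnm : n = d * m := (Nat.mul_div_cancel' hdn).symm
  have hm0 : 0 < m := Nat.pos_of_ne_zero (fun h => by simp [h] at hnm; omega)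
  haveI : NeZero m := ⟨hm0.ne'⟩
  -- factor a and b
  have hda : (d : ℤ) ∣ a := ha ▸ Int.gcd_dvd_left a n
  have hdb : (d : ℤ) ∣ b := hb ▸ Int.gcd_dvd_left b n
  obtain ⟨a', ha'⟩ := hda
  obtain ⟨b', hb'⟩ := hdb
  have key : ∀ (c c' : ℤ), c = (d:ℤ) * c' → Int.gcd c n = d → Int.gcd c' m = 1 := by
    intro c c' hc hcd
    have h1 : Int.gcd ((d:ℤ) * c') ((d:ℤ) * m) = d * Int.gcd c' m := by
      rw [Int.gcd_mul_left]; simp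
    rw [← hc, ← Nat.cast_mul, ← hnm, hcd] at h1
    have := Nat.eq_of_mul_eq_mul_left hd0 (show d * 1 = d * Int.gcd c' (m:ℤ) by simpa using h1)
    exact this.symm
  have hgcd_a' : Int.gcd a' m = 1 := key a a' ha' ha
  have hgcd_b' : Int.gcd b' m = 1 := key b b' hb' hb
  -- build x0: solution of a' * x0 ≡ b' mod m, coprime to m
  obtain ⟨c, v, hcv⟩ := Int.isCoprime_iff_gcd_eq_one.mpr hgcd_a'
  set x0 : ℤ := c * b' with hx0_def
  have hx0_cop : IsCoprime x0 (m : ℤ) := by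
    apply IsCoprime.mul_left
    · exact ⟨a', v, by linarith⟩
    · exact Int.isCoprime_iff_gcd_eq_one.mpr hgcd_b'
  have hx0_sol : a' * x0 ≡ b' [ZMOD m] := by
    have h2 : c * a' = 1 - v * (m:ℤ) := by linarith
    have h : a' * x0 - b' = (m:ℤ) * (-(v * b')) := by
      calc a' * (c * b') - b' = (c * a') * b' - b' := by ring
      _ = (1 - v * (m:ℤ)) * b' - b' := by rw [h2]
      _ = (m:ℤ) * (-(v * b')) := by ring
    exact (Int.modEq_iff_dvd.mpr ⟨-(v * b'), h⟩).symm
  -- x0 is a unit mod m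
  obtain ⟨p, q, hpq⟩ := hx0_cop
  have hx0_unit : IsUnit ((x0 : ℤ) : ZMod m) := by
    apply IsUnit.of_mul_eq_one ((p : ℤ) : ZMod m)
    have h1 : ((p * x0 + q * (m:ℤ) : ℤ) : ZMod m) = ((1:ℤ) : ZMod m) := by rw [hpq]
    push_cast at h1
    rw [ZMod.natCast_self, mul_zero, add_zero] at h1
    rw [mul_comm]
    simpa using h1
  -- lift to a unit mod n
  obtain ⟨u0, hu0⟩ := ZMod.unitsMap_surjective hmn hx0_unit.unit
  have hu0' : (ZMod.castHom hmn (ZMod m)) (u0 : ZMod n) = ((x0 : ℤ) : ZMod m) := by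
    have := congrArg (fun z : (ZMod m)ˣ => (z : ZMod m)) hu0
    simpa [ZMod.unitsMap] using this
  -- translation between integer congruences and ZMod equations
  have hzmod : ∀ x : ℕ, (a * (x:ℤ) % (n:ℤ) = b % (n:ℤ)) ↔ (a : ZMod n) * ((x:ℕ) : ZMod n) = (b : ZMod n) := by
    intro x
    have : (a : ZMod n) * ((x:ℕ) : ZMod n) = ((a * (x:ℤ) : ℤ) : ZMod n) := by push_cast; ring
    rw [this, ZMod.intCast_eq_intCast_iff]
    exact Iff.rfl
  -- key equivalence
  have hkey : ∀ u : (ZMod n)ˣ, ((a : ZMod n) * (u : ZMod n) = (b : ZMod n)) ↔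
      ZMod.unitsMap hmn u = ZMod.unitsMap hmn u0 := by
    intro u
    set w : ℤ := (((u : ZMod n).val : ℕ) : ℤ) with hw_def
    have hwu : (((u : ZMod n).val : ℕ) : ZMod n) = (u : ZMod n) := by
      rw [ZMod.natCast_val, ZMod.cast_id]
    have step1 : ((a : ZMod n) * (u : ZMod n) = (b : ZMod n)) ↔ a * w ≡ b [ZMOD n] := by
      rw [← hwu, ← hzmod]
      exact Iff.rfl
    have step2 : (a * w ≡ b [ZMOD n]) ↔ (a' * w ≡ b' [ZMOD m]) := by
      rw [Int.modEq_iff_dvd, Int.modEq_iff_dvd]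
      have heq : b - a * w = (d:ℤ) * (b' - a' * w) := by rw [ha', hb']; ring
      have heq2 : ((n:ℕ):ℤ) = (d:ℤ) * (m:ℤ) := by rw [hnm]; push_cast; ring
      rw [heq, heq2]
      exact mul_dvd_mul_iff_left (by exact_mod_cast hd0.ne')
    have step3 : (a' * w ≡ b' [ZMOD m]) ↔ (w ≡ x0 [ZMOD m]) := by
      constructor
      · intro h
        have h3 : c * a' ≡ 1 [ZMOD m] := by
          refine (Int.modEq_iff_dvd.mpr ⟨-v, ?_⟩).symm
          linarith
        calc w = 1 * w := (one_mul w).symm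
          _ ≡ (c * a') * w [ZMOD m] := h3.symm.mul_right w
          _ ≡ (c * a') * x0 [ZMOD m] := by
              rw [mul_assoc, mul_assoc]
              exact (h.trans hx0_sol.symm).mul_left c
          _ ≡ 1 * x0 [ZMOD m] := h3.mul_right x0
          _ = x0 := one_mul x0
      · intro h
        exact ((Int.ModEq.mul_left a' h)).trans hx0_sol
    have step4 : (w ≡ x0 [ZMOD m]) ↔ ((w : ZMod m) = ((x0:ℤ) : ZMod m)) :=
      (ZMod.intCast_eq_intCast_iff _ _ _).symm
    have step5 : ((w : ℤ) : ZMod m) = (ZMod.castHom hmn (ZMod m)) (u : ZMod n) := by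
      rw [hw_def]
      push_cast
      rw [ZMod.natCast_val, ZMod.castHom_apply]
    have step6 : (ZMod.unitsMap hmn u = ZMod.unitsMap hmn u0) ↔
        ((ZMod.castHom hmn (ZMod m)) (u : ZMod n) = (ZMod.castHom hmn (ZMod m)) (u0 : ZMod n)) := by
      rw [Units.ext_iff]
      simp [ZMod.unitsMap]
    rw [step1, step2, step3, step4, step5, step6, hu0']
  classical
  have hbij : ((Finset.range n).filter
        (fun x => Nat.gcd x n = 1 ∧ a * (x : ℤ) % (n : ℤ) = b % (n : ℤ))).card
      = (Finset.univ.filter (fun u : (ZMod n)ˣ => (a : ZMod n) * (u : ZMod n) = (b : ZMod n))).card := by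
    symm
    apply Finset.card_bij (fun (u : (ZMod n)ˣ) _ => (u : ZMod n).val)
    · intro u hu
      simp only [Finset.mem_filter, Finset.mem_univ, true_and] at hu ⊢
      refine ⟨Finset.mem_range.mpr (ZMod.val_lt _), ?_, ?_⟩
      · have h1 : IsUnit (((u : ZMod n).val : ℕ) : ZMod n) := by
          rw [ZMod.natCast_val, ZMod.cast_id]; exact u.isUnit
        exact (ZMod.isUnit_iff_coprime _ n).mp h1
      · rw [hzmod, ZMod.natCast_val, ZMod.cast_id]
        exact hu
    · intro u _ u' _ h
      apply Units.ext
      have := congrArg (fun t : ℕ => (t : ZMod n)) h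
      simpa [ZMod.natCast_val, ZMod.cast_id] using this
    · intro x hx
      simp only [Finset.mem_filter, Finset.mem_range] at hx
      obtain ⟨hx1, hx2, hx3⟩ := hx
      refine ⟨ZMod.unitOfCoprime x hx2, ?_, ?_⟩
      · simp only [Finset.mem_filter, Finset.mem_univ, true_and]
        rw [ZMod.coe_unitOfCoprime]
        exact (hzmod x).mp hx3
      · show ((ZMod.unitOfCoprime x hx2 : ZMod n)).val = x
        rw [ZMod.coe_unitOfCoprime]
        exact ZMod.val_cast_of_lt hx1
  rw [hbij]
  have hfilter : (Finset.univ.filter (fun u : (ZMod n)ˣ => (a : ZMod n) * (u : ZMod n) = (b : ZMod n)))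
      = (Finset.univ.filter (fun u : (ZMod n)ˣ => ZMod.unitsMap hmn u = ZMod.unitsMap hmn u0)) := by
    apply Finset.filter_congr
    intro u _
    simpa using hkey u
  rw [hfilter, fiber_card (ZMod.unitsMap hmn) (ZMod.unitsMap_surjective hmn) (ZMod.unitsMap hmn u0),
    ZMod.card_units_eq_totient, ZMod.card_units_eq_totient]
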